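/- Let n ≥ 1 and 1 ≤ q ≤ 2. For every t > 0, ω_{n-1}(2π)^{-n} ∫_0^∞ r^{n-1} e^{-qtr²} (1+r²)^{-n/2} dr ≤ (2 log(e+1/t) / ((4π)^{n/2} Γ(n/2))) · (e^{-1/2} + (1/n)(e/(2q))^{n/2}), where ω_{n-1} = 2π^{n/2}/Γ(n/2). -/

import Mathlib

open MeasureTheory Real Set
open scoped ENNReal NNReal

noncomputable section

abbrev Rn (n : ℕ) := EuclideanSpace ℝ (Fin n)

/-- Fourier transform on ℝⁿ with normalization (2π)^{-n/2} ∫ e^{-ix·ξ} f(x) dx. -/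
def FTn {n : ℕ} (f : Rn n → ℂ) (ξ : Rn n) : ℂ :=
  (((2 * π) ^ (-(n : ℝ) / 2) : ℝ) : ℂ) *
    ∫ x : Rn n, Complex.exp (-Complex.I * ((inner ℝ x ξ : ℝ) : ℂ)) * f x

/-- Inverse Fourier transform on ℝⁿ. -/
def invFTn {n : ℕ} (g : Rn n → ℂ) (x : Rn n) : ℂ :=
  (((2 * π) ^ (-(n : ℝ) / 2) : ℝ) : ℂ) *
    ∫ ξ : Rn n, Complex.exp (Complex.I * ((inner ℝ x ξ : ℝ) : ℂ)) * g ξ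

/-- Heat semigroup on ℝⁿ. -/
def heatn {n : ℕ} (t : ℝ) (f : Rn n → ℂ) : Rn n → ℂ :=
  invFTn (fun ξ => Complex.exp (-(t : ℂ) * (‖ξ‖ : ℂ) ^ 2) * FTn f ξ)

/-- The H^{s,q} norm ‖𝓕⁻¹[(1+|ξ|²)^{s/2} 𝓕f]‖_{L^q}. -/
def HsqNorm (n : ℕ) (s q : ℝ) (f : Rn n → ℂ) : ℝ≥0∞ :=
  eLpNorm (invFTn (fun ξ => (((1 + ‖ξ‖ ^ 2) ^ (s / 2) : ℝ) : ℂ) * FTn f ξ))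
    (ENNReal.ofReal q) volume

/-- Surface area of the unit sphere in ℝⁿ. -/
def ωSphere (n : ℕ) : ℝ := 2 * π ^ ((n : ℝ) / 2) / Real.Gamma ((n : ℝ) / 2)

/-- Exponential integral E₁. -/
def E1 (τ : ℝ) : ℝ := ∫ ρ in Ioi τ, Real.exp (-ρ) / ρ

set_option maxHeartbeats 1000000 in
/-- Key integral inequality. -/
lemma key_ineq (n : ℕ) (hn : 1 ≤ n) (q : ℝ) (hq1 : 1 ≤ q) (t : ℝ) (ht : 0 < t) :
    (∫ r in Ioi (0 : ℝ),
        r ^ ((n : ℝ) - 1) * Real.exp (-(q * t * r ^ 2)) * (1 + r ^ 2) ^ (-(n : ℝ) / 2)) ≤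
      Real.log (Real.exp 1 + 1 / t) *
        (Real.exp (-(1 / 2)) + (1 / (n : ℝ)) * (Real.exp 1 / (2 * q)) ^ ((n : ℝ) / 2)) := by
  have hq0 : (0:ℝ) < q := lt_of_lt_of_le one_pos hq1
  set a : ℝ := q * t with ha_def
  have ha : 0 < a := mul_pos hq0 ht
  set f : ℝ → ℝ := fun r =>
    r ^ ((n : ℝ) - 1) * Real.exp (-(q * t * r ^ 2)) * (1 + r ^ 2) ^ (-(n : ℝ) / 2) with hf_def
  have hn1 : (1:ℝ) ≤ (n:ℝ) := by exact_mod_cast hn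
  have hnpos : (0:ℝ) < (n:ℝ) := lt_of_lt_of_le one_pos hn1
  set s : ℝ := Real.exp 1 / (2 * q) with hs_def
  have hs : 0 < s := by positivity
  set R : ℝ := Real.sqrt s with hR_def
  have hR : 0 < R := Real.sqrt_pos.mpr hs
  have hR2 : R ^ 2 = s := Real.sq_sqrt hs.le
  -- measurability of f
  have hfm : Continuous f := by
    apply Continuous.mul
    apply Continuous.mul
    · exact Real.continuous_rpow_const (by linarith)
    · exact Real.continuous_exp.comp ((continuous_const.mul ((continuous_id.pow 2))).neg)
    · refine (continuous_const.add (continuous_id.pow 2)).rpow_const fun x => Or.inl ?_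
      have : (0:ℝ) < 1 + x ^ 2 := by positivity
      exact ne_of_gt this
  -- f nonneg
  have hf_nonneg : ∀ r : ℝ, 0 < r → 0 ≤ f r := by
    intro r hr
    have h1 : (0:ℝ) < 1 + r ^ 2 := by positivity
    simp only [hf_def]
    positivity
  -- pointwise bound on Ioc 0 R
  have hbd1 : ∀ r ∈ Ioc (0:ℝ) R, f r ≤ r ^ ((n:ℝ) - 1) := by
    intro r hr
    have hr0 : 0 < r := hr.1
    have h1 : Real.exp (-(q * t * r ^ 2)) ≤ 1 := by
      apply Real.exp_le_one_iff.mpr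
      nlinarith
    have h2 : (1 + r ^ 2) ^ (-(n:ℝ) / 2) ≤ 1 := by
      apply Real.rpow_le_one_of_one_le_of_nonpos (by nlinarith)
      nlinarith
    have h3 : (0:ℝ) ≤ r ^ ((n:ℝ) - 1) := Real.rpow_nonneg hr0.le _
    have h4 : 0 ≤ Real.exp (-(q * t * r ^ 2)) := (Real.exp_pos _).le
    have h5 : (0:ℝ) ≤ (1 + r ^ 2) ^ (-(n:ℝ) / 2) := Real.rpow_nonneg (by positivity) _
    calc f r ≤ r ^ ((n:ℝ) - 1) * 1 * 1 := by
          simp only [hf_def]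
          apply mul_le_mul (mul_le_mul le_rfl h1 h4 h3) h2 h5 (by nlinarith)
      _ = r ^ ((n:ℝ) - 1) := by ring
  -- pointwise bound on Ioi R
  have hbd2 : ∀ r ∈ Ioi R, f r ≤ 1 / (r * (1 + a * r ^ 2)) := by
    intro r hr
    have hr0 : 0 < r := lt_trans hR hr
    have hrn : r ^ ((n:ℝ)) ≤ (1 + r ^ 2) ^ ((n:ℝ) / 2) := by
      have : r ^ ((n:ℝ)) = (r ^ 2) ^ ((n:ℝ) / 2) := by
        rw [← Real.rpow_natCast r 2, ← Real.rpow_mul hr0.le]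
        congr 1
        push_cast
        ring
      rw [this]
      exact Real.rpow_le_rpow (by positivity) (by nlinarith) (by positivity)
    have hstep1 : r ^ ((n:ℝ) - 1) * (1 + r ^ 2) ^ (-(n:ℝ) / 2) ≤ 1 / r := by
      have hpos : (0:ℝ) < (1 + r ^ 2) ^ ((n:ℝ) / 2) := Real.rpow_pos_of_pos (by positivity) _
      rw [neg_div, Real.rpow_neg (by positivity), ← div_eq_mul_inv,
        div_le_div_iff₀ hpos hr0, one_mul]
      calc r ^ ((n:ℝ) - 1) * r = r ^ ((n:ℝ) - 1) * r ^ (1:ℝ) := by rw [Real.rpow_one]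
        _ = r ^ ((n:ℝ)) := by rw [← Real.rpow_add hr0]; norm_num
        _ ≤ (1 + r ^ 2) ^ ((n:ℝ) / 2) := hrn
    have hstep2 : Real.exp (-(q * t * r ^ 2)) ≤ (1 + a * r ^ 2)⁻¹ := by
      have h1 : 1 + a * r ^ 2 ≤ Real.exp (a * r ^ 2) := by
        have := Real.add_one_le_exp (a * r ^ 2)
        linarith
      rw [show -(q * t * r ^ 2) = -(a * r ^ 2) by rw [ha_def], Real.exp_neg]
      apply inv_anti₀ (by positivity) h1
    have e_nonneg : 0 ≤ Real.exp (-(q * t * r ^ 2)) := (Real.exp_pos _).le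
    calc f r = (r ^ ((n:ℝ) - 1) * (1 + r ^ 2) ^ (-(n:ℝ) / 2)) * Real.exp (-(q * t * r ^ 2)) := by
          simp only [hf_def]; ring
      _ ≤ (1 / r) * (1 + a * r ^ 2)⁻¹ := by
          apply mul_le_mul hstep1 hstep2 e_nonneg (by positivity)
      _ = 1 / (r * (1 + a * r ^ 2)) := by
          rw [one_div, one_div, mul_inv]
  -- tail integral value and integrability
  have tail_deriv : ∀ x ∈ Ici R, HasDerivAt (fun r : ℝ => -(1/2) * Real.log (a + 1 / r ^ 2))
      (1 / (x * (1 + a * x ^ 2))) x := by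
    intro x hx
    have hx0 : (0:ℝ) < x := lt_of_lt_of_le hR hx
    have hx2 : x ^ 2 ≠ 0 := by positivity
    have harg : a + 1 / x ^ 2 ≠ 0 := by positivity
    have h1 : HasDerivAt (fun r : ℝ => a + 1 / r ^ 2) (-(2 * x) / (x ^ 2) ^ 2) x := by
      simpa using ((hasDerivAt_pow 2 x).inv hx2).const_add a
    have h2 := (h1.log harg).const_mul (-(1/2) : ℝ)
    refine h2.congr_deriv ?_
    field_simp
    ring
  have tail_nonneg : ∀ x ∈ Ioi R, 0 ≤ 1 / (x * (1 + a * x ^ 2)) := by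
    intro x hx
    have hx0 : (0:ℝ) < x := lt_trans hR hx
    positivity
  have tail_tendsto : Filter.Tendsto (fun r : ℝ => -(1/2) * Real.log (a + 1 / r ^ 2))
      Filter.atTop (nhds (-(1/2) * Real.log a)) := by
    have h1 : Filter.Tendsto (fun r : ℝ => a + 1 / r ^ 2) Filter.atTop (nhds (a + 0)) := by
      apply Filter.Tendsto.const_add
      have h0 : Filter.Tendsto (fun r : ℝ => r ^ 2) Filter.atTop Filter.atTop :=
        Filter.tendsto_pow_atTop (by norm_num)
      simpa [one_div, Function.comp_def] using tendsto_inv_atTop_zero.comp h0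
    rw [add_zero] at h1
    exact ((Real.continuousAt_log (ne_of_gt ha)).tendsto.comp h1).const_mul _
  have tail_int : IntegrableOn (fun r : ℝ => 1 / (r * (1 + a * r ^ 2))) (Ioi R) :=
    integrableOn_Ioi_deriv_of_nonneg' tail_deriv tail_nonneg tail_tendsto
  have tail_val : (∫ r in Ioi R, 1 / (r * (1 + a * r ^ 2))) =
      (-(1/2) * Real.log a) - (-(1/2) * Real.log (a + 1 / R ^ 2)) :=
    integral_Ioi_of_hasDerivAt_of_nonneg' tail_deriv tail_nonneg tail_tendsto
  -- integrability of f on the two pieces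
  have hg1_int : IntegrableOn (fun r : ℝ => r ^ ((n:ℝ) - 1)) (Ioc 0 R) := by
    have h := intervalIntegral.intervalIntegrable_rpow' (a := 0) (b := R)
      (by linarith : (-1:ℝ) < (n:ℝ) - 1)
    rwa [intervalIntegrable_iff_integrableOn_Ioc_of_le hR.le] at h
  have hf_int1 : IntegrableOn f (Ioc 0 R) := by
    apply hg1_int.mono' (hfm.aestronglyMeasurable)
    filter_upwards [ae_restrict_mem measurableSet_Ioc] with r hr
    rw [Real.norm_of_nonneg (hf_nonneg r hr.1)]
    exact hbd1 r hr
  have hf_int2 : IntegrableOn f (Ioi R) := by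
    apply tail_int.mono' (hfm.aestronglyMeasurable)
    filter_upwards [ae_restrict_mem measurableSet_Ioi] with r hr
    rw [Real.norm_of_nonneg (hf_nonneg r (lt_trans hR hr))]
    exact hbd2 r hr
  -- split the integral
  have hsplit : (∫ r in Ioi (0:ℝ), f r) = (∫ r in Ioc 0 R, f r) + ∫ r in Ioi R, f r := by
    rw [← setIntegral_union (Ioc_disjoint_Ioi_same) measurableSet_Ioi hf_int1 hf_int2,
      Ioc_union_Ioi_eq_Ioi hR.le]
  -- bound piece 1
  have hI1 : (∫ r in Ioc 0 R, f r) ≤ (1 / (n : ℝ)) * s ^ ((n : ℝ) / 2) := by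
    have h1 : (∫ r in Ioc 0 R, f r) ≤ ∫ r in Ioc 0 R, r ^ ((n:ℝ) - 1) :=
      setIntegral_mono_on hf_int1 hg1_int measurableSet_Ioc hbd1
    have h2 : (∫ r in Ioc (0:ℝ) R, r ^ ((n:ℝ) - 1)) = R ^ ((n:ℝ)) / (n:ℝ) := by
      rw [← intervalIntegral.integral_of_le hR.le,
        integral_rpow (Or.inl (by linarith : (-1:ℝ) < (n:ℝ) - 1))]
      rw [Real.zero_rpow (by linarith : (n:ℝ) - 1 + 1 ≠ 0)]
      norm_num
    have h3 : R ^ ((n:ℝ)) = s ^ ((n:ℝ) / 2) := by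
      rw [hR_def, Real.sqrt_eq_rpow, ← Real.rpow_mul hs.le]
      ring_nf
    rw [h2, h3] at h1
    calc (∫ r in Ioc 0 R, f r) ≤ s ^ ((n:ℝ)/2) / (n:ℝ) := h1
      _ = (1 / (n : ℝ)) * s ^ ((n : ℝ) / 2) := by ring
  -- bound piece 2
  have hlogL : (1:ℝ) ≤ Real.log (Real.exp 1 + 1 / t) := by
    have h0 : 0 < 1 / t := by positivity
    calc (1:ℝ) = Real.log (Real.exp 1) := (Real.log_exp 1).symm
      _ ≤ Real.log (Real.exp 1 + 1 / t) := Real.log_le_log (Real.exp_pos 1) (by linarith)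
  have hlogL0 : (0:ℝ) ≤ Real.log (Real.exp 1 + 1 / t) := by linarith
  have hI2 : (∫ r in Ioi R, f r) ≤
      Real.exp (-(1/2)) * Real.log (Real.exp 1 + 1 / t) := by
    have h1 : (∫ r in Ioi R, f r) ≤ ∫ r in Ioi R, 1 / (r * (1 + a * r ^ 2)) :=
      setIntegral_mono_on hf_int2 tail_int measurableSet_Ioi hbd2
    rw [tail_val] at h1
    have hval : (-(1/2) * Real.log a) - (-(1/2) * Real.log (a + 1 / R ^ 2)) =
        (1/2) * Real.log (1 + 2 / (Real.exp 1 * t)) := by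
      have hRR : 1 / R ^ 2 = 2 * q / Real.exp 1 := by
        rw [hR2, hs_def]
        field_simp
      rw [hRR]
      have hrw : -(1/2) * Real.log a - -(1/2) * Real.log (a + 2 * q / Real.exp 1) =
          (1/2) * (Real.log (a + 2 * q / Real.exp 1) - Real.log a) := by ring
      rw [hrw, ← Real.log_div (by positivity) (ne_of_gt ha)]
      congr 2
      rw [ha_def]
      field_simp
    rw [hval] at h1
    have h2 : Real.log (1 + 2 / (Real.exp 1 * t)) ≤ Real.log (Real.exp 1 + 1 / t) := by
      apply Real.log_le_log (by positivity)
      have he2 : (2:ℝ) ≤ Real.exp 1 := by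
        have := Real.add_one_le_exp (1:ℝ)
        linarith
      have h1e : (1:ℝ) ≤ Real.exp 1 := by linarith
      have : 2 / (Real.exp 1 * t) ≤ 1 / t := by
        rw [div_le_div_iff₀ (by positivity) ht]
        nlinarith
      linarith
    have h3 : (1:ℝ)/2 ≤ Real.exp (-(1/2)) := by
      have := Real.add_one_le_exp (-(1/2) : ℝ)
      linarith
    have h4 : (0:ℝ) ≤ Real.log (1 + 2 / (Real.exp 1 * t)) := by
      apply Real.log_nonneg
      have : 0 < 2 / (Real.exp 1 * t) := by positivity
      linarith
    calc (∫ r in Ioi R, f r) ≤ (1/2) * Real.log (1 + 2 / (Real.exp 1 * t)) := h1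
      _ ≤ Real.exp (-(1/2)) * Real.log (Real.exp 1 + 1 / t) := by
          apply mul_le_mul h3 h2 h4 (Real.exp_pos _).le
  -- assemble
  have hB : (0:ℝ) ≤ (1 / (n : ℝ)) * s ^ ((n : ℝ) / 2) := by positivity
  calc (∫ r in Ioi (0:ℝ), f r) = (∫ r in Ioc 0 R, f r) + ∫ r in Ioi R, f r := hsplit
    _ ≤ (1 / (n : ℝ)) * s ^ ((n : ℝ) / 2) +
        Real.exp (-(1/2)) * Real.log (Real.exp 1 + 1 / t) := add_le_add hI1 hI2
    _ ≤ Real.log (Real.exp 1 + 1 / t) *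
        (Real.exp (-(1 / 2)) + (1 / (n : ℝ)) * s ^ ((n : ℝ) / 2)) := by
        have h5 : (1 / (n : ℝ)) * s ^ ((n : ℝ) / 2) ≤
            Real.log (Real.exp 1 + 1 / t) * ((1 / (n : ℝ)) * s ^ ((n : ℝ) / 2)) :=
          le_mul_of_one_le_left hB hlogL
        rw [mul_add]
        linarith

theorem stmt14 (n : ℕ) (hn : 1 ≤ n) (q : ℝ) (hq1 : 1 ≤ q) (hq2 : q ≤ 2) (t : ℝ) (ht : 0 < t) :
    ωSphere n * (2 * π) ^ (-(n : ℝ)) *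
        ∫ r in Ioi (0 : ℝ),
          r ^ ((n : ℝ) - 1) * Real.exp (-(q * t * r ^ 2)) * (1 + r ^ 2) ^ (-(n : ℝ) / 2) ≤
      2 * Real.log (Real.exp 1 + 1 / t) / ((4 * π) ^ ((n : ℝ) / 2) * Real.Gamma ((n : ℝ) / 2)) *
        (Real.exp (-(1 / 2)) + (1 / (n : ℝ)) * (Real.exp 1 / (2 * q)) ^ ((n : ℝ) / 2)) := by
  have hpi := Real.pi_pos
  have hn1 : (1:ℝ) ≤ (n:ℝ) := by exact_mod_cast hn
  have hΓpos : 0 < Real.Gamma ((n:ℝ)/2) := Real.Gamma_pos_of_pos (by linarith)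
  have hΓ : Real.Gamma ((n:ℝ)/2) ≠ 0 := ne_of_gt hΓpos
  have hC : ωSphere n * (2 * π) ^ (-(n : ℝ)) =
      2 / ((4 * π) ^ ((n : ℝ) / 2) * Real.Gamma ((n : ℝ) / 2)) := by
    unfold ωSphere
    have h2pi : (2*π) ^ (-(n:ℝ)) = ((2:ℝ) ^ ((n:ℝ)))⁻¹ * (π ^ ((n:ℝ)))⁻¹ := by
      rw [Real.mul_rpow (by norm_num) hpi.le, Real.rpow_neg (by norm_num),
        Real.rpow_neg hpi.le]
    have h4pi : (4*π) ^ ((n:ℝ)/2) = (2:ℝ) ^ ((n:ℝ)) * π ^ ((n:ℝ)/2) := by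
      rw [Real.mul_rpow (by norm_num) hpi.le]
      congr 1
      rw [show (4:ℝ) = 2 ^ (2:ℝ) by
          rw [show (2:ℝ) = ((2:ℕ):ℝ) by norm_num]
          rw [Real.rpow_natCast]
          norm_num,
        ← Real.rpow_mul (by norm_num : (0:ℝ) ≤ 2)]
      congr 1
      ring
    have hππ : π ^ ((n:ℝ)/2) * π ^ ((n:ℝ)/2) = π ^ ((n:ℝ)) := by
      rw [← Real.rpow_add hpi]
      congr 1
      ring
    have hp1 : π ^ ((n:ℝ)/2) ≠ 0 := ne_of_gt (Real.rpow_pos_of_pos hpi _)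
    have hp2 : π ^ ((n:ℝ)) ≠ 0 := ne_of_gt (Real.rpow_pos_of_pos hpi _)
    have h2n : (2:ℝ) ^ ((n:ℝ)) ≠ 0 := ne_of_gt (Real.rpow_pos_of_pos (by norm_num) _)
    rw [h2pi, h4pi]
    field_simp
    rw [← hππ]
    ring
  have hD : 0 < (4 * π) ^ ((n : ℝ) / 2) * Real.Gamma ((n : ℝ) / 2) :=
    mul_pos (Real.rpow_pos_of_pos (by linarith) _) hΓpos
  have hkey := key_ineq n hn q hq1 t ht
  rw [hC]
  calc 2 / ((4 * π) ^ ((n : ℝ) / 2) * Real.Gamma ((n : ℝ) / 2)) *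
        ∫ r in Ioi (0 : ℝ),
          r ^ ((n : ℝ) - 1) * Real.exp (-(q * t * r ^ 2)) * (1 + r ^ 2) ^ (-(n : ℝ) / 2)
      ≤ 2 / ((4 * π) ^ ((n : ℝ) / 2) * Real.Gamma ((n : ℝ) / 2)) *
        (Real.log (Real.exp 1 + 1 / t) *
          (Real.exp (-(1 / 2)) + (1 / (n : ℝ)) * (Real.exp 1 / (2 * q)) ^ ((n : ℝ) / 2))) :=
        mul_le_mul_of_nonneg_left hkey (le_of_lt (div_pos two_pos hD))
    _ = 2 * Real.log (Real.exp 1 + 1 / t) /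
          ((4 * π) ^ ((n : ℝ) / 2) * Real.Gamma ((n : ℝ) / 2)) *
        (Real.exp (-(1 / 2)) + (1 / (n : ℝ)) * (Real.exp 1 / (2 * q)) ^ ((n : ℝ) / 2)) := by
        ring
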